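/- Terminal coalgebras of strictly indexed endofunctors: let (Ē, e) be a strictly indexed endofunctor on L : C^op → Cat with corresponding split fibration endofunctor E on Σ_C L. Assume (1) L respects terminal coalgebras (each reindexing functor L(f) strictly preserves terminal coalgebras), (2) the terminal Ē-coalgebra (νĒ, coind_{Ē}) exists in C, and (3) the endofunctor ě := L(coind_{Ē}) ∘ e_{νĒ} on L(νĒ) has a terminal coalgebra (νě, coind_{ě}). Then E has terminal coalgebra νE = (νĒ, νě) with structure map (coind_{Ē}, coind_{ě}). -/

import Mathlib

universe w₂ w₁ v u

open CategoryTheory CategoryTheory.Limits Opposite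

namespace CHAD

variable {C : Type u} [Category.{v} C]

/-- The total category (Grothendieck construction) `Σ_C L` of a strictly indexed category
`L : Cᵒᵖ ⥤ Cat`. -/
structure Total (L : Cᵒᵖ ⥤ Cat.{w₂, w₁}) where
  base : C
  fib : L.obj (op base)

namespace Total

variable {L : Cᵒᵖ ⥤ Cat.{w₂, w₁}}

/-- A morphism `(W, w) ⟶ (X, x)` in `Σ_C L` is a pair `(f : W ⟶ X, f̄ : w ⟶ L(f)(x))`. -/
structure Hom (X Y : Total L) where
  base : X.base ⟶ Y.base
  fib : X.fib ⟶ (L.map base.op).toFunctor.obj Y.fib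

theorem Hom.ext' {X Y : Total L} (f g : Hom X Y) (w_base : f.base = g.base)
    (w_fib : f.fib ≫ eqToHom (by rw [w_base]) = g.fib) : f = g := by
  cases f; cases g
  dsimp at w_base
  subst w_base
  simpa using w_fib

/-- Identity morphism. -/
def id (X : Total L) : Hom X X where
  base := 𝟙 X.base
  fib := eqToHom (by simp)

/-- Composition of morphisms. -/
def comp {X Y Z : Total L} (f : Hom X Y) (g : Hom Y Z) : Hom X Z where
  base := f.base ≫ g.base
  fib := f.fib ≫ (L.map f.base.op).toFunctor.map g.fib ≫ eqToHom (by rw [op_comp, Functor.map_comp]; rfl)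

attribute [local simp] eqToHom_map

instance : Category (Total L) where
  Hom X Y := Total.Hom X Y
  id X := Total.id X
  comp f g := Total.comp f g
  id_comp f := by
    refine Hom.ext' _ _ (by simp [comp, id]) ?_
    simp only [comp, id]
    simp
    erw [Functor.congr_hom (congrArg Cat.Hom.toFunctor (L.map_id (op _))) f.fib]
    simp
    erw [eqToHom_trans, eqToHom_refl, Category.comp_id]
  comp_id f := by
    refine Hom.ext' _ _ (by simp [comp, id]) ?_
    simp only [comp, id]
    simp
    erw [eqToHom_trans, eqToHom_refl, Category.comp_id]
  assoc f g h := by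
    refine Hom.ext' _ _ (by simp [comp, id]) ?_
    simp only [comp]
    simp [Functor.congr_hom (congrArg Cat.Hom.toFunctor (L.map_comp g.base.op f.base.op)) h.fib]
    erw [eqToHom_trans]

@[simp] theorem id_base (X : Total L) : (𝟙 X : X ⟶ X).base = 𝟙 X.base := rfl

@[simp] theorem id_fib (X : Total L) :
    (𝟙 X : X ⟶ X).fib = eqToHom (by simp) := rfl

@[simp] theorem comp_base {X Y Z : Total L} (f : X ⟶ Y) (g : Y ⟶ Z) :
    (f ≫ g).base = f.base ≫ g.base := rfl

@[simp] theorem comp_fib {X Y Z : Total L} (f : X ⟶ Y) (g : Y ⟶ Z) :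
    (f ≫ g).fib = f.fib ≫ (L.map f.base.op).toFunctor.map g.fib ≫
      eqToHom (show (L.map f.base.op).toFunctor.obj ((L.map g.base.op).toFunctor.obj Z.fib) =
          (L.map (f.base ≫ g.base).op).toFunctor.obj Z.fib by
        rw [op_comp, Functor.map_comp]; rfl) := rfl

variable (L)

/-- The projection functor `Σ_C L ⥤ C`. -/
def proj : Total L ⥤ C where
  obj X := X.base
  map f := f.base
  map_id _ := rfl
  map_comp _ _ := rfl

end Total

end CHAD

namespace CHAD

open CategoryTheory CategoryTheory.Limits Opposite

variable {C : Type u} [Category.{v} C] (L : Cᵒᵖ ⥤ Cat.{w₂, w₁})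
variable (Ebar : C ⥤ C) (e : L ⟶ Ebar.op ⋙ L)

/-- The split fibration endofunctor on `Σ_C L` corresponding to a strictly indexed
endofunctor `(Ē, e)` on `L`. -/
def totalLift : Total L ⥤ Total L where
  obj X := ⟨Ebar.obj X.base, (e.app (op X.base)).toFunctor.obj X.fib⟩
  map {X Y} f := ⟨Ebar.map f.base,
    (e.app (op X.base)).toFunctor.map f.fib ≫
      eqToHom (Functor.congr_obj (congrArg Cat.Hom.toFunctor (e.naturality f.base.op)) Y.fib)⟩
  map_id X := by
    refine Total.Hom.ext' _ _ (by simp) ?_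
    simp [eqToHom_map]
    erw [eqToHom_map (e.app (op X.base)).toFunctor]
    erw [eqToHom_trans, eqToHom_trans]
  map_comp {X Y Z} f g := by
    refine Total.Hom.ext' _ _ (by simp) ?_
    dsimp
    simp only [Total.comp_fib, Functor.map_comp, eqToHom_map, Category.assoc]
    rw [show (e.app (op X.base)).toFunctor.map ((L.map f.base.op).toFunctor.map g.fib) =
      (L.map f.base.op ≫ e.app (op X.base)).toFunctor.map g.fib from rfl]
    rw [Functor.congr_hom (congrArg Cat.Hom.toFunctor (e.naturality f.base.op)) g.fib]
    simp [eqToHom_map]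
    erw [eqToHom_trans, eqToHom_trans]

end CHAD

/-!
Terminal coalgebras of strictly indexed endofunctors: let `(Ē, e)` be a strictly indexed
endofunctor on `L : Cᵒᵖ ⥤ Cat` with corresponding split fibration endofunctor `E` on
`Σ_C L`.  Assume (1) `L` respects terminal coalgebras (each reindexing functor `L(f)`
preserves terminal coalgebras), (2) the terminal `Ē`-coalgebra `(νĒ, coind_Ē)` exists in
`C`, and (3) the endofunctor `ě := L(coind_Ē) ∘ e_{νĒ}` on `L(νĒ)` has a terminal coalgebra
`(νě, coind_ě)`.  Then `E` has terminal coalgebra `νE = (νĒ, νě)` with structure map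
`(coind_Ē, coind_ě)`.
-/

namespace CHAD

open CategoryTheory CategoryTheory.Limits Opposite

/-- A functor `G` preserves terminal coalgebras if, for every pair of endofunctors
intertwined with `G` by a natural isomorphism, the induced functor on coalgebra categories
sends terminal coalgebras to terminal coalgebras. -/
def PreservesTerminalCoalgebras {A : Type*} [Category A] {B : Type*} [Category B]
    (G : A ⥤ B) : Prop :=
  ∀ (E₁ : A ⥤ A) (E₂ : B ⥤ B) (β : E₁ ⋙ G ≅ G ⋙ E₂)
    (V : CategoryTheory.Endofunctor.Coalgebra E₁), IsTerminal V →
      Nonempty (IsTerminal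
        (⟨G.obj V.V, G.map V.str ≫ β.hom.app V.V⟩ : CategoryTheory.Endofunctor.Coalgebra E₂))

variable {C : Type u} [Category.{v} C] (L : Cᵒᵖ ⥤ Cat.{w₂, w₁})
variable (Ebar : C ⥤ C) (e : L ⟶ Ebar.op ⋙ L)

/-- The endofunctor `ě := L(coind_Ē) ∘ e_{νĒ}` on the fibre `L(νĒ)`. -/
def fibreCoalgEndo (ν1 : CategoryTheory.Endofunctor.Coalgebra Ebar) :
    (L.obj (op ν1.V)) ⥤ (L.obj (op ν1.V)) :=
  (e.app (op ν1.V) ≫ L.map ν1.str.op).toFunctor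

/-- The coalgebra `(νE, coind_E) = ((νĒ, νě), (coind_Ē, coind_ě))` for the split fibration
endofunctor `E` on `Σ_C L`. -/
def totalCoalgebra (ν1 : CategoryTheory.Endofunctor.Coalgebra Ebar)
    (ν2 : CategoryTheory.Endofunctor.Coalgebra (fibreCoalgEndo L Ebar e ν1)) :
    CategoryTheory.Endofunctor.Coalgebra (totalLift L Ebar e) :=
  ⟨⟨ν1.V, ν2.V⟩, ⟨ν1.str, ν2.str⟩⟩

theorem aux_fib_eq {L : Cᵒᵖ ⥤ Cat.{w₂, w₁}} {X Y : Total L} {f g : Total.Hom X Y}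
    (h : f = g) :
    f.fib = g.fib ≫ eqToHom (by rw [h]) := by
  subst h; simp

/-- The base coalgebra of a total coalgebra. -/
def baseCoalg (W : CategoryTheory.Endofunctor.Coalgebra (totalLift L Ebar e)) :
    CategoryTheory.Endofunctor.Coalgebra Ebar :=
  ⟨W.V.base, W.str.base⟩

/-- The fibre endofunctor at the base of `W`. -/
def fibEndoAt (W : CategoryTheory.Endofunctor.Coalgebra (totalLift L Ebar e)) :
    L.obj (op W.V.base) ⥤ L.obj (op W.V.base) :=
  (e.app (op W.V.base) ≫ L.map W.str.base.op).toFunctor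

/-- The fibre coalgebra of a total coalgebra. -/
def fibCoalg (W : CategoryTheory.Endofunctor.Coalgebra (totalLift L Ebar e)) :
    CategoryTheory.Endofunctor.Coalgebra (fibEndoAt L Ebar e W) :=
  ⟨W.V.fib, W.str.fib⟩

theorem intertwine (ν1 : CategoryTheory.Endofunctor.Coalgebra Ebar)
    (W : CategoryTheory.Endofunctor.Coalgebra (totalLift L Ebar e))
    (g : baseCoalg L Ebar e W ⟶ ν1) :
    fibreCoalgEndo L Ebar e ν1 ⋙ (L.map g.f.op).toFunctor =
      (L.map g.f.op).toFunctor ⋙ fibEndoAt L Ebar e W := by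
  have nat : e.app (op ν1.V) ≫ L.map (Ebar.map g.f).op = L.map g.f.op ≫ e.app (op W.V.base) :=
    (e.naturality g.f.op).symm
  have key : (e.app (op ν1.V) ≫ L.map ν1.str.op) ≫ L.map g.f.op =
      L.map g.f.op ≫ (e.app (op W.V.base) ≫ L.map W.str.base.op) := by
    rw [Category.assoc, ← L.map_comp, ← op_comp, ← g.h, op_comp, L.map_comp, ← Category.assoc,
      nat]
    rfl
  exact congrArg Cat.Hom.toFunctor key


theorem eqToIso_hom_app_aux {A : Type*} [Category A] {B : Type*} [Category B] {F G : A ⥤ B}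
    (h : F = G) (X : A) : (eqToIso h).hom.app X = eqToHom (Functor.congr_obj h X) := by
  subst h; rfl

theorem fib_cancel_aux {A : Type*} [Category A] {B : Type*} [Category B] (Φ : A ⥤ B)
    {x y y' : A} {a c c' d d' : B} (w : a ⟶ Φ.obj x) (m : x ⟶ y) (p : y = y')
    (q : Φ.obj y' = d) (u : a ⟶ c) (s : c ⟶ c') (r : c' = d') (t : d' = d)
    (r' : c' = Φ.obj y)
    (h : w ≫ Φ.map (m ≫ eqToHom p) ≫ eqToHom q = (u ≫ s ≫ eqToHom r) ≫ eqToHom t) :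
    w ≫ Φ.map m = u ≫ s ≫ eqToHom r' := by
  subst p; subst t; subst r
  simp only [eqToHom_refl, Category.comp_id, Category.assoc, Functor.map_id] at h
  rw [← cancel_mono (eqToHom q)]
  simp [h]

theorem terminal_coalgebra_of_strictly_indexed_endofunctor
    (hres : ∀ {X Y : Cᵒᵖ} (f : X ⟶ Y),
      PreservesTerminalCoalgebras ((L.map f).toFunctor : L.obj X ⥤ L.obj Y))
    (ν1 : CategoryTheory.Endofunctor.Coalgebra Ebar) (h1 : IsTerminal ν1)
    (ν2 : CategoryTheory.Endofunctor.Coalgebra (fibreCoalgEndo L Ebar e ν1))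
    (h2 : IsTerminal ν2) :
    Nonempty (IsTerminal (totalCoalgebra L Ebar e ν1 ν2)) := by
  have lift : ∀ W : CategoryTheory.Endofunctor.Coalgebra (totalLift L Ebar e),
      W ⟶ totalCoalgebra L Ebar e ν1 ν2 := fun W => by
    set g := h1.from (baseCoalg L Ebar e W) with hgdef
    have ht := Nonempty.some <| hres (Y := op W.V.base) g.f.op (fibreCoalgEndo L Ebar e ν1) (fibEndoAt L Ebar e W)
      (eqToIso (intertwine L Ebar e ν1 W g)) ν2 h2
    set k := ht.from (fibCoalg L Ebar e W) with hkdef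
    refine ⟨⟨g.f, k.f⟩, ?_⟩
    refine Total.Hom.ext' _ _ ?_ ?_
    · exact g.h
    · have kh := k.h
      dsimp only [totalCoalgebra, totalLift, Total.comp_fib]
      simp only [eqToIso.hom, eqToHom_app] at kh
      dsimp only [fibCoalg, fibEndoAt] at kh
      have kh2 : W.str.fib ≫ (L.map W.str.base.op).toFunctor.map ((e.app (op W.V.base)).toFunctor.map k.f) =
          k.f ≫ (L.map g.f.op).toFunctor.map ν2.str ≫
            eqToHom (Functor.congr_obj (intertwine L Ebar e ν1 W g) ν2.V) :=
        k.h.trans (congrArg (fun x => k.f ≫ (L.map g.f.op).toFunctor.map ν2.str ≫ x)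
          (eqToIso_hom_app_aux (intertwine L Ebar e ν1 W g) ν2.V))
      simp only [Functor.map_comp, eqToHom_map, Category.assoc, eqToHom_trans]
      change (W.str.fib ≫ (L.map W.str.base.op).toFunctor.map ((e.app (op W.V.base)).toFunctor.map k.f) ≫
        eqToHom _) ≫ eqToHom _ = k.f ≫ (L.map g.f.op).toFunctor.map ν2.str ≫ eqToHom _
      simp only [Category.assoc]
      rw [reassoc_of% kh2]
      erw [Category.assoc, Category.assoc, eqToHom_trans]
      congr 2
      exact eqToHom_trans _ _
  have uniq : ∀ (W : CategoryTheory.Endofunctor.Coalgebra (totalLift L Ebar e))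
      (ψ φ : W ⟶ totalCoalgebra L Ebar e ν1 ν2), ψ = φ := fun W ψ φ => by
    set g := h1.from (baseCoalg L Ebar e W) with hgdef
    have ht := Nonempty.some <| hres (Y := op W.V.base) g.f.op (fibreCoalgEndo L Ebar e ν1) (fibEndoAt L Ebar e W)
      (eqToIso (intertwine L Ebar e ν1 W g)) ν2 h2
    have hb : ∀ χ : W ⟶ totalCoalgebra L Ebar e ν1 ν2, χ.f.base = g.f := fun χ => by
      have hχ : (baseCoalg L Ebar e W).str ≫ Ebar.map χ.f.base = χ.f.base ≫ ν1.str :=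
        congrArg Total.Hom.base χ.h
      exact congrArg CategoryTheory.Endofunctor.Coalgebra.Hom.f
        (h1.hom_ext ⟨χ.f.base, hχ⟩ g)
    obtain ⟨⟨bψ, uψ⟩, hψ⟩ := ψ
    obtain ⟨⟨bφ, uφ⟩, hφ⟩ := φ
    have hbψ : bψ = g.f := hb ⟨⟨bψ, uψ⟩, hψ⟩
    have hbφ : bφ = g.f := hb ⟨⟨bφ, uφ⟩, hφ⟩
    subst hbψ; subst hbφ
    have cond : ∀ (u : W.V.fib ⟶ (L.map g.f.op).toFunctor.obj ν2.V)
        (hc : W.str ≫ (totalLift L Ebar e).map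
          (⟨g.f, u⟩ : Total.Hom W.V (totalCoalgebra L Ebar e ν1 ν2).V) =
          (⟨g.f, u⟩ : Total.Hom W.V (totalCoalgebra L Ebar e ν1 ν2).V) ≫
            (totalCoalgebra L Ebar e ν1 ν2).str),
        (fibCoalg L Ebar e W).str ≫ (fibEndoAt L Ebar e W).map u =
          u ≫ ((L.map g.f.op).toFunctor.map ν2.str ≫
            eqToHom (Functor.congr_obj (intertwine L Ebar e ν1 W g) ν2.V)) := fun u hc => by
      have hfib := aux_fib_eq hc
      dsimp only [totalCoalgebra, totalLift, Total.comp_fib] at hfib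
      show W.str.fib ≫ (L.map W.str.base.op).toFunctor.map ((e.app (op W.V.base)).toFunctor.map u) = _
      exact fib_cancel_aux _ _ _ _ _ _ _ _ _ _ hfib
    have hu : uψ = uφ := by
      have h := ht.hom_ext (Y := fibCoalg L Ebar e W)
        ⟨uψ, (cond uψ hψ).trans (congrArg (fun x => uψ ≫ (L.map g.f.op).toFunctor.map ν2.str ≫ x)
          (eqToIso_hom_app_aux (intertwine L Ebar e ν1 W g) ν2.V).symm)⟩
        ⟨uφ, (cond uφ hφ).trans (congrArg (fun x => uφ ≫ (L.map g.f.op).toFunctor.map ν2.str ≫ x)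
          (eqToIso_hom_app_aux (intertwine L Ebar e ν1 W g) ν2.V).symm)⟩
      exact congrArg CategoryTheory.Endofunctor.Coalgebra.Hom.f h
    subst hu
    rfl
  exact ⟨IsTerminal.ofUniqueHom lift (fun W ψ => uniq W ψ (lift W))⟩

end CHAD
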